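/- Let J be orthogonal with J² = -I on V ⊕ V*, and B coisotropic with J(B⊥) ∩ B ⊆ B⊥. Then J(B ∩ JB) = B ∩ JB and B⊥ ∩ JB = JB⊥ ∩ B, so this subspace is J-stable; hence J induces a well-defined endomorphism J' of (B ∩ JB)/(B⊥ ∩ JB) with (J')² = -I. -/
import Mathlib


open Module LinearMap

set_option maxSynthPendingDepth 3

/-- The symmetric pairing `⟨X+ξ, Y+η⟩ = (ξ(Y) + η(X))/2` on `V ⊕ V*`. -/
noncomputable def pair (V : Type) [AddCommGroup V] [Module ℝ V] :
    LinearMap.BilinForm ℝ (V × Module.Dual ℝ V) :=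
  LinearMap.mk₂ ℝ (fun u v => (u.2 v.1 + v.2 u.1) / 2)
    (by intro m₁ m₂ n; simp; ring)
    (by intro c m n; simp [smul_eq_mul]; ring)
    (by intro m n₁ n₂; simp; ring)
    (by intro c m n; simp [smul_eq_mul]; ring)

/-- Let `J` be orthogonal with `J² = -I` and `B` coisotropic with
`J(B⊥) ∩ B ⊆ B⊥`.  Then `J(B ∩ JB) = B ∩ JB` and `B⊥ ∩ JB = JB⊥ ∩ B`, so this
subspace is `J`-stable; hence `J` induces an endomorphism `J'` of
`(B ∩ JB)/(B⊥ ∩ JB)` with `(J')² = -I`. -/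
theorem j_descends_on_b_cap_jb
    (V : Type) [AddCommGroup V] [Module ℝ V] [FiniteDimensional ℝ V]
    (J : (V × Module.Dual ℝ V) →ₗ[ℝ] (V × Module.Dual ℝ V))
    (hJ2 : ∀ u, J (J u) = -u)
    (horth : ∀ u v, pair V (J u) (J v) = pair V u v)
    (B : Submodule ℝ (V × Module.Dual ℝ V))
    (hco : (pair V).orthogonal B ≤ B)
    (hred : Submodule.map J ((pair V).orthogonal B) ⊓ B ≤ (pair V).orthogonal B) :
    Submodule.map J (B ⊓ Submodule.map J B) = B ⊓ Submodule.map J B ∧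
    (pair V).orthogonal B ⊓ Submodule.map J B =
      Submodule.map J ((pair V).orthogonal B) ⊓ B ∧
    Submodule.map J ((pair V).orthogonal B ⊓ Submodule.map J B) =
      (pair V).orthogonal B ⊓ Submodule.map J B ∧
    ∃ J' : ((B ⊓ Submodule.map J B : Submodule ℝ (V × Module.Dual ℝ V)) ⧸
              Submodule.comap (B ⊓ Submodule.map J B).subtype
                ((pair V).orthogonal B ⊓ Submodule.map J B)) →ₗ[ℝ]
           ((B ⊓ Submodule.map J B : Submodule ℝ (V × Module.Dual ℝ V)) ⧸
              Submodule.comap (B ⊓ Submodule.map J B).subtype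
                ((pair V).orthogonal B ⊓ Submodule.map J B)),
      (∀ (x : V × Module.Dual ℝ V) (hx : x ∈ B ⊓ Submodule.map J B)
         (hJx : J x ∈ B ⊓ Submodule.map J B),
        J' (Submodule.Quotient.mk ⟨x, hx⟩) = Submodule.Quotient.mk ⟨J x, hJx⟩) ∧
      (∀ q, J' (J' q) = -q) := by
  have hA : Submodule.map J (B ⊓ Submodule.map J B) = B ⊓ Submodule.map J B := by
    ext x
    constructor
    · rintro ⟨y, ⟨hyB, z, hzB, rfl⟩, rfl⟩
      refine ⟨?_, ⟨J z, hyB, rfl⟩⟩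
      rw [hJ2]; exact B.neg_mem hzB
    · rintro ⟨hxB, y, hyB, rfl⟩
      refine ⟨y, ⟨hyB, ?_⟩, rfl⟩
      have : y = -J (J y) := by rw [hJ2]; simp
      rw [this]
      exact (Submodule.map J B).neg_mem ⟨J y, hxB, rfl⟩
  have hB : (pair V).orthogonal B ⊓ Submodule.map J B =
      Submodule.map J ((pair V).orthogonal B) ⊓ B := by
    ext x
    constructor
    · rintro ⟨hxO, y, hyB, rfl⟩
      have hJx : J (J y) ∈ Submodule.map J ((pair V).orthogonal B) ⊓ B := by
        refine ⟨⟨J y, hxO, rfl⟩, ?_⟩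
        rw [hJ2]; exact B.neg_mem hyB
      have hJxO := hred hJx
      constructor
      · have : J y = -J (J (J y)) := by rw [hJ2 (J y)]; simp
        rw [this]
        exact (Submodule.map J ((pair V).orthogonal B)).neg_mem ⟨J (J y), hJxO, rfl⟩
      · exact hco hxO
    · rintro ⟨⟨y, hyO, rfl⟩, hxB⟩
      exact ⟨hred ⟨⟨y, hyO, rfl⟩, hxB⟩, ⟨y, hco hyO, rfl⟩⟩
  have hC : Submodule.map J ((pair V).orthogonal B ⊓ Submodule.map J B) =
      (pair V).orthogonal B ⊓ Submodule.map J B := by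
    ext x
    constructor
    · rintro ⟨y, hy, rfl⟩
      have hy' : y ∈ Submodule.map J ((pair V).orthogonal B) ⊓ B := hB ▸ hy
      obtain ⟨⟨z, hzO, rfl⟩, hzB⟩ := hy'
      rw [hB]
      refine ⟨⟨J z, ?_, rfl⟩, ?_⟩
      · exact hred ⟨⟨z, hzO, rfl⟩, hzB⟩
      · rw [hJ2]; exact B.neg_mem (hco hzO)
    · intro hx
      have hx' : x ∈ Submodule.map J ((pair V).orthogonal B) ⊓ B := hB ▸ hx
      obtain ⟨⟨z, hzO, rfl⟩, hzB⟩ := hx'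
      refine ⟨z, ⟨hzO, ?_⟩, rfl⟩
      have : z = -J (J z) := by rw [hJ2]; simp
      rw [this]
      exact (Submodule.map J B).neg_mem ⟨J z, hzB, rfl⟩
  refine ⟨hA, hB, hC, ?_⟩
  set W : Submodule ℝ (V × Module.Dual ℝ V) := B ⊓ Submodule.map J B with hW
  set N : Submodule ℝ W :=
    Submodule.comap W.subtype ((pair V).orthogonal B ⊓ Submodule.map J B) with hN
  have hJW : ∀ x ∈ W, J x ∈ W := by
    intro x hx
    rw [← hA]
    exact ⟨x, hx, rfl⟩
  set f : W →ₗ[ℝ] W := J.restrict hJW with hf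
  have hNN : N ≤ Submodule.comap f N := by
    rintro ⟨x, hx⟩ hxN
    simp only [hN, Submodule.mem_comap] at hxN ⊢
    rw [← hC]
    exact ⟨x, hxN, rfl⟩
  refine ⟨Submodule.mapQ N N f hNN, ?_, ?_⟩
  · intro x hx hJx
    rw [Submodule.mapQ_apply]
    rfl
  · intro q
    obtain ⟨⟨x, hx⟩, rfl⟩ := Submodule.Quotient.mk_surjective _ q
    rw [Submodule.mapQ_apply, Submodule.mapQ_apply, ← Submodule.Quotient.mk_neg]
    congr 1
    apply Subtype.ext
    show J (J x) = -x
    exact hJ2 x
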